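/- In an Esakia space, for every pair of points x, y with x ≰ y, there exists a clopen upset U with x ∈ U and y ∉ U (the Priestley separation axiom holds). -/
import Mathlib


/- STATEMENT 6: In an Esakia space, for every pair of points x, y with x ≰ y there is a
clopen upset U with x ∈ U and y ∉ U (Priestley separation). -/

/-- An Esakia space: a Stone space equipped with a partial order such that principal
upsets are closed and the down-closure of a clopen set is clopen. -/
structure EsaSpace where
  carrier : Type
  [topSp : TopologicalSpace carrier]
  [ord : PartialOrder carrier]
  compact : CompactSpace carrier
  t2 : T2Space carrier
  zeroDim : ∀ U : Set carrier, IsOpen U →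
    ∃ S : Set (Set carrier), (∀ V ∈ S, IsClopen V) ∧ U = ⋃₀ S
  ici_closed : ∀ x : carrier, IsClosed (Set.Ici x)
  down_clopen : ∀ U : Set carrier, IsClopen U →
    IsClopen (↑(lowerClosure U) : Set carrier)

attribute [instance] EsaSpace.topSp EsaSpace.ord

/-- An Esakia morphism: continuous, order preserving, satisfying the back condition. -/
structure EsaHom (X Y : EsaSpace) where
  toFun : X.carrier → Y.carrier
  continuous : Continuous toFun
  monotone : Monotone toFun
  up : ∀ (x : X.carrier) (y : Y.carrier), toFun x ≤ y → ∃ z, x ≤ z ∧ toFun z = y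

theorem priestley_separation (X : EsaSpace) (x y : X.carrier) (hxy : ¬ x ≤ y) :
    ∃ U : Set X.carrier, IsClopen U ∧ IsUpperSet U ∧ x ∈ U ∧ y ∉ U := by
  have hy : y ∈ (Set.Ici x)ᶜ := fun h => hxy h
  obtain ⟨S, hS, hU⟩ := X.zeroDim _ (X.ici_closed x).isOpen_compl
  rw [hU] at hy
  obtain ⟨V, hVS, hyV⟩ := hy
  have hVclo := hS V hVS
  have hVsub : V ⊆ (Set.Ici x)ᶜ := hU ▸ Set.subset_sUnion_of_mem hVS
  refine ⟨(↑(lowerClosure V) : Set X.carrier)ᶜ, (X.down_clopen V hVclo).compl,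
    (lowerClosure V).lower.compl, ?_, ?_⟩
  · intro hx
    obtain ⟨z, hzV, hxz⟩ := hx
    exact hVsub hzV hxz
  · exact fun h => h (subset_lowerClosure hyV)
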